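/- If B[b,a] ∈ [1/2,1), then there is no path from b to a in the supermajority relation R_{B[b,a]}; and if additionally B[a,b] > B[b,a], then there is a path from a to b in R_{B[b,a]}. -/

import Mathlib

def Pasym {A : Type*} (R : A → A → Prop) : A → A → Prop :=
  fun a b => R a b ∧ ¬ R b a

def PAcyclic {A : Type*} (R : A → A → Prop) : Prop :=
  ∀ a b, Relation.TransGen (Pasym R) a b → ¬ Pasym R b a

def SuzumuraConsistent {A : Type*} (R : A → A → Prop) : Prop :=
  ∀ a b, Relation.TransGen R a b → ¬ Pasym R b a

def Scl {A : Type*} (R : A → A → Prop) : A → A → Prop :=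
  fun a b => R a b ∨ (Relation.TransGen R a b ∧ R b a)

def IsLinearRel {A : Type*} (L : A → A → Prop) : Prop :=
  (∀ a b, L a b → ¬ L b a) ∧
  (∀ a b c, L a b → L b c → L a c) ∧
  (∀ a b c, ¬ L a b → ¬ L b c → ¬ L a c) ∧
  (∀ a b, a ≠ b → L a b ∨ L b a)

def Respects {A : Type*} (R L : A → A → Prop) : Prop :=
  IsLinearRel L ∧ ∀ a b, Pasym R a b → L a b

def IsWeakOrder {A : Type*} (R : A → A → Prop) : Prop :=
  (∀ a b, R a b → ¬ R b a) ∧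
  (∀ a b c, R a b → R b c → R a c) ∧
  (∀ a b c, ¬ R a b → ¬ R b c → ¬ R a c)

noncomputable def Ncnt {A ι : Type*} (Ri : ι → A → A → Prop) (a b : A) : ℕ :=
  Nat.card {i : ι // Pasym (Ri i) a b}

noncomputable def PhiFn {A ι : Type*} (Ri : ι → A → A → Prop) (f : ℕ → ℕ → ℝ) (a b : A) : ℝ :=
  f (Ncnt Ri a b) (Ncnt Ri b a)

def Rmaj {A ι : Type*} (Ri : ι → A → A → Prop) (f : ℕ → ℕ → ℝ) (α : ℝ) : A → A → Prop :=
  fun a b => PhiFn Ri f a b > α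

def IsPathFrom {A : Type*} (R : A → A → Prop) (a b : A) (l : List A) : Prop :=
  2 ≤ l.length ∧ l.Nodup ∧ l.head? = some a ∧ l.getLast? = some b ∧ l.Chain' R

def strengthOf {A : Type*} (Φ : A → A → ℝ) (l : List A) : ℝ :=
  ((l.zip l.tail).map fun p => Φ p.1 p.2).foldr min 1

noncomputable def Bval {A : Type*} (R : A → A → Prop) (Φ : A → A → ℝ) (a b : A) : ℝ :=
  sSup {s : ℝ | ∃ l : List A, IsPathFrom R a b l ∧ strengthOf Φ l = s}


lemma foldr_min_gt (β : ℝ) (L : List ℝ) :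
    β < L.foldr min 1 ↔ β < 1 ∧ ∀ x ∈ L, β < x := by
  induction L with
  | nil => simp
  | cons x xs ih => simp [lt_min_iff, ih]; tauto

lemma chain'_iff_zip {A : Type*} (R : A → A → Prop) (l : List A) :
    l.Chain' R ↔ ∀ p ∈ l.zip l.tail, R p.1 p.2 := by
  induction l with
  | nil => simp [List.Chain']
  | cons x xs ih =>
    cases xs with
    | nil => simp [List.Chain']
    | cons y ys =>
      show List.IsChain R _ ↔ _
      rw [List.isChain_cons_cons, show List.IsChain R (y :: ys) ↔ _ from ih]
      simp only [List.tail_cons, List.zip_cons_cons, List.mem_cons]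
      constructor
      · rintro ⟨h1, h2⟩ p (rfl | hp)
        · exact h1
        · exact h2 p hp
      · intro h
        exact ⟨h _ (Or.inl rfl), fun p hp => h p (Or.inr hp)⟩

lemma strength_gt_iff {A : Type*} (Φ : A → A → ℝ) (β : ℝ) (l : List A) :
    β < strengthOf Φ l ↔ β < 1 ∧ l.Chain' (fun x y => β < Φ x y) := by
  rw [strengthOf, foldr_min_gt, chain'_iff_zip]
  constructor
  · rintro ⟨h1, h2⟩
    exact ⟨h1, fun p hp => h2 _ (List.mem_map_of_mem hp)⟩
  · rintro ⟨h1, h2⟩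
    refine ⟨h1, fun x hx => ?_⟩
    obtain ⟨p, hp, rfl⟩ := List.mem_map.mp hx
    exact h2 p hp

lemma strength_le_one {A : Type*} (Φ : A → A → ℝ) (l : List A) :
    strengthOf Φ l ≤ 1 := by
  rw [strengthOf]
  induction ((l.zip l.tail).map fun p => Φ p.1 p.2) with
  | nil => simp
  | cons x xs ih => exact le_trans (min_le_right _ _) ih

theorem stmt16 {A ι : Type*} [Fintype A] [Fintype ι] (Ri : ι → A → A → Prop)
    (f : ℕ → ℕ → ℝ)
    (hf0 : ∀ n m : ℕ, f n m ∈ Set.Icc (0:ℝ) 1)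
    (hf1 : ∀ n m : ℕ, n + m ≤ Fintype.card ι → f (n+1) m > f n m)
    (hf2 : ∀ n m : ℕ, n + m ≤ Fintype.card ι → f n (m+1) < f n m)
    (hf3 : ∀ n : ℕ, n + n ≤ Fintype.card ι → f n n = 1/2)
    (a b : A)
    (hB1 : 1/2 ≤ Bval (Rmaj Ri f (1/2)) (PhiFn Ri f) b a)
    (hB2 : Bval (Rmaj Ri f (1/2)) (PhiFn Ri f) b a < 1) :
    (¬ ∃ l : List A, IsPathFrom (Rmaj Ri f (Bval (Rmaj Ri f (1/2)) (PhiFn Ri f) b a)) b a l) ∧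
    (Bval (Rmaj Ri f (1/2)) (PhiFn Ri f) a b > Bval (Rmaj Ri f (1/2)) (PhiFn Ri f) b a →
      ∃ l : List A, IsPathFrom (Rmaj Ri f (Bval (Rmaj Ri f (1/2)) (PhiFn Ri f) b a)) a b l) := by

  set β := Bval (Rmaj Ri f (1/2)) (PhiFn Ri f) b a with hβ
  have hbdd : BddAbove {s : ℝ | ∃ l : List A,
      IsPathFrom (Rmaj Ri f (1/2)) b a l ∧ strengthOf (PhiFn Ri f) l = s} := by
    refine ⟨1, ?_⟩
    rintro s ⟨l, _, rfl⟩
    exact strength_le_one _ _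
  constructor
  · rintro ⟨l, hlen, hnd, hhd, hlast, hch⟩
    have hch' : l.Chain' (fun x y => β < PhiFn Ri f x y) := hch
    have hs : β < strengthOf (PhiFn Ri f) l :=
      (strength_gt_iff _ _ _).mpr ⟨hB2, hch'⟩
    have hchR : l.Chain' (Rmaj Ri f (1/2)) := by
      exact List.IsChain.imp (fun x y hxy => lt_of_le_of_lt hB1 hxy) hch' 
    have hmem : strengthOf (PhiFn Ri f) l ∈ {s : ℝ | ∃ l : List A,
        IsPathFrom (Rmaj Ri f (1/2)) b a l ∧ strengthOf (PhiFn Ri f) l = s} :=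
      ⟨l, ⟨hlen, hnd, hhd, hlast, hchR⟩, rfl⟩
    have hle : strengthOf (PhiFn Ri f) l ≤ β := le_csSup hbdd hmem
    exact absurd hs (not_lt.mpr hle)
  · intro h
    set S' := {s : ℝ | ∃ l : List A,
        IsPathFrom (Rmaj Ri f (1/2)) a b l ∧ strengthOf (PhiFn Ri f) l = s} with hS'
    have hpos : (0:ℝ) < β := lt_of_lt_of_le (by norm_num) hB1
    have hne : S'.Nonempty := by
      by_contra hemp
      rw [Set.not_nonempty_iff_eq_empty] at hemp
      have : Bval (Rmaj Ri f (1/2)) (PhiFn Ri f) a b = 0 := by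
        rw [Bval, ← hS', hemp, Real.sSup_empty]
      rw [this] at h
      exact absurd (lt_trans hpos h) (lt_irrefl _)
    have : ∃ s ∈ S', β < s := by
      by_contra hcon
      push_neg at hcon
      have : Bval (Rmaj Ri f (1/2)) (PhiFn Ri f) a b ≤ β := csSup_le hne hcon
      exact absurd h (not_lt.mpr this)
    obtain ⟨s, ⟨l, ⟨hlen, hnd, hhd, hlast, hch⟩, rfl⟩, hs⟩ := this
    refine ⟨l, hlen, hnd, hhd, hlast, ?_⟩
    exact ((strength_gt_iff _ _ _).mp hs).2
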